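/- Let $A$ be an integral domain, $B \supseteq A$ a module-finite extension domain, and $\{M_i\}_i$ a sequence of $B$-modules. If there exists a non-zero $b \in B$ such that each localization $(M_i)_b$ is torsion-free over $B_b$, then there exists a non-zero $a \in A$ such that each $(M_i)_a$ is torsion-free over $A_a$. -/

import Mathlib

open Polynomial in
lemma aux_dvd {A B : Type*} [CommRing A] [CommRing B] [IsDomain B] [Algebra A B]
    {b : B} (hb : b ≠ 0) :
    ∀ (n : ℕ) (p : Polynomial A), p.natDegree ≤ n → p ≠ 0 → Polynomial.aeval b p = 0 →
      ∃ a : A, a ≠ 0 ∧ ∃ c : B, algebraMap A B a = b * c := by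
  intro n
  induction n with
  | zero =>
    intro p hd hp hev
    by_cases hc : p.coeff 0 = 0
    · exact absurd (by rw [Polynomial.eq_C_of_natDegree_eq_zero (Nat.le_zero.mp hd), hc,
        map_zero]) hp
    · refine ⟨-p.coeff 0, neg_ne_zero.mpr hc, Polynomial.aeval b p.divX, ?_⟩
      have h2 := congrArg (Polynomial.aeval b) (divX_mul_X_add p)
      simp only [map_add, map_mul, aeval_X, aeval_C, hev] at h2
      rw [map_neg]
      linear_combination -h2
  | succ n ih =>
    intro p hd hp hev
    by_cases hc : p.coeff 0 = 0
    · have hpx : p.divX * X = p := by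
        have := divX_mul_X_add p
        rwa [hc, map_zero, add_zero] at this
      have hdvx : p.divX ≠ 0 := by
        intro h
        rw [h, zero_mul] at hpx
        exact hp hpx.symm
      have hev' : Polynomial.aeval b p.divX = 0 := by
        have h2 : Polynomial.aeval b p.divX * b = 0 := by
          have h3 := hev
          rw [← hpx] at h3
          simpa using h3
        rcases mul_eq_zero.mp h2 with h | h
        · exact h
        · exact absurd h hb
      have hle : p.divX.natDegree ≤ n := by
        rw [natDegree_divX_eq_natDegree_tsub_one]
        omega
      exact ih p.divX hle hdvx hev'
    · refine ⟨-p.coeff 0, neg_ne_zero.mpr hc, Polynomial.aeval b p.divX, ?_⟩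
      have h2 := congrArg (Polynomial.aeval b) (divX_mul_X_add p)
      simp only [map_add, map_mul, aeval_X, aeval_C, hev] at h2
      rw [map_neg]
      linear_combination -h2

/-- Let `A ⊆ B` be domains with `B` module-finite over `A`, and `{Mᵢ}` a sequence of
`B`-modules.  If some nonzero `b ∈ B` makes every localization `(Mᵢ)_b` torsion-free
over `B_b`, then some nonzero `a ∈ A` makes every `(Mᵢ)_a` torsion-free over `A_a`. -/
theorem stmt_8 (A B : Type*) [CommRing A] [IsDomain A] [CommRing B] [IsDomain B]
    [Algebra A B] (hinj : Function.Injective (algebraMap A B)) [Module.Finite A B]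
    (M : ℕ → Type*) [∀ i, AddCommGroup (M i)] [∀ i, Module B (M i)]
    [∀ i, Module A (M i)] [∀ i, IsScalarTower A B (M i)]
    (hB : ∃ b : B, b ≠ 0 ∧ ∀ i,
      NoZeroSMulDivisors (Localization (Submonoid.powers b))
        (LocalizedModule (Submonoid.powers b) (M i))) :
    ∃ a : A, a ≠ 0 ∧ ∀ i,
      NoZeroSMulDivisors (Localization (Submonoid.powers a))
        (LocalizedModule (Submonoid.powers a) (M i)) := by
  obtain ⟨b, hb, hBtf⟩ := hB
  have hint : IsIntegral A b := IsIntegral.of_finite A b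
  obtain ⟨p, hm, hp0⟩ := hint
  obtain ⟨a, ha, c, hac⟩ := aux_dvd hb p.natDegree p le_rfl hm.ne_zero (by rwa [Polynomial.aeval_def])
  -- powers of a and b are nonzerodivisors
  have hapow : Submonoid.powers a ≤ nonZeroDivisors A := by
    rintro x ⟨k, rfl⟩
    exact pow_mem (mem_nonZeroDivisors_of_ne_zero ha) k
  have hbpow : Submonoid.powers b ≤ nonZeroDivisors B := by
    rintro x ⟨k, rfl⟩
    exact pow_mem (mem_nonZeroDivisors_of_ne_zero hb) k
  refine ⟨a, ha, fun i => ⟨fun {r m} hrm => ?_⟩⟩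
  by_cases hr : r = 0
  · exact Or.inl hr
  right
  induction m using LocalizedModule.induction_on with
  | h x s =>
    obtain ⟨⟨u, t⟩, rfl⟩ := IsLocalization.mk'_surjective (Submonoid.powers a) r
    dsimp only at hr hrm
    have hu : u ≠ 0 := by
      rintro rfl
      exact hr (IsLocalization.mk'_zero _)
    rw [← Localization.mk_eq_mk'_apply, LocalizedModule.mk_smul_mk] at hrm
    rw [show (0 : LocalizedModule (Submonoid.powers a) (M i)) = LocalizedModule.mk 0 1 by
      rw [← LocalizedModule.zero_mk 1], LocalizedModule.mk_eq] at hrm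
    obtain ⟨v, hv⟩ := hrm
    simp only [smul_zero, one_smul] at hv
    -- hv : v • u • x = 0 in M i
    have hv' : ((v : A) * u) • x = 0 := by
      rw [mul_smul, ← Submonoid.smul_def, hv]
    set w : A := (v : A) * u with hw
    have hwne : w ≠ 0 := mul_ne_zero (nonZeroDivisors.ne_zero (hapow v.2)) hu
    -- move to the b-localization
    have hBinj : Function.Injective (algebraMap B (Localization (Submonoid.powers b))) :=
      IsLocalization.injective _ hbpow
    have hkey : (algebraMap B (Localization (Submonoid.powers b)) (algebraMap A B w)) •
        (LocalizedModule.mk x (1 : Submonoid.powers b)) = 0 := by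
      rw [show algebraMap B (Localization (Submonoid.powers b)) (algebraMap A B w)
          = Localization.mk (algebraMap A B w) 1 by rw [Localization.mk_one_eq_algebraMap],
        LocalizedModule.mk_smul_mk, algebraMap_smul, hv', one_mul, LocalizedModule.zero_mk]
    have := hBtf i
    rcases eq_zero_or_eq_zero_of_smul_eq_zero hkey with h | h
    · exact absurd h (by
        simpa using fun h' => hwne (hinj (by simpa using hBinj (by simpa using h))))
    · -- mk x 1 = 0 in (M i)_b, so some power of b kills x
      rw [show (0 : LocalizedModule (Submonoid.powers b) (M i)) = LocalizedModule.mk 0 1 by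
        rw [← LocalizedModule.zero_mk 1], LocalizedModule.mk_eq] at h
      obtain ⟨⟨_, k, rfl⟩, hk⟩ := h
      simp only [smul_zero, one_smul, Submonoid.smul_def] at hk
      -- hk : b ^ k • x = 0 in M i
      have hak : (a ^ k) • x = 0 := by
        have : (algebraMap A B (a ^ k)) • x = 0 := by
          rw [map_pow, hac, mul_pow, mul_comm, mul_smul, hk, smul_zero]
        rwa [algebraMap_smul] at this
      rw [show (0 : LocalizedModule (Submonoid.powers a) (M i)) = LocalizedModule.mk 0 1 by
        rw [← LocalizedModule.zero_mk 1], LocalizedModule.mk_eq]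
      exact ⟨⟨a ^ k, k, rfl⟩, by simp [Submonoid.smul_def, smul_comm _ (s : A), hak]⟩
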